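/- For every weighted digraph and every k with 0 ≤ k ≤ n−v, the matrix L·Q_k is the Kirchhoff matrix of some weighted digraph; explicitly, all off-diagonal entries of L·Q_k are nonpositive, all diagonal entries are nonnegative, and every row sum of L·Q_k equals 0. -/
import Mathlib


open Matrix BigOperators Filter

/-- An out forest of the weighted digraph with arc-weight matrix `ε`:
a set of arcs (pairs with positive weight), every vertex has at most one
incoming arc, and there is no directed cycle. -/
def IsOutForest {n : ℕ} (ε : Fin n → Fin n → ℝ) (F : Finset (Fin n × Fin n)) : Prop :=
  (∀ p ∈ F, 0 < ε p.1 p.2) ∧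
  (∀ u u' v : Fin n, (u, v) ∈ F → (u', v) ∈ F → u = u') ∧
  ¬ ∃ (k : ℕ) (f : ℕ → Fin n), 0 < k ∧ f 0 = f k ∧ ∀ i < k, (f i, f (i + 1)) ∈ F

/-- The weight of a forest: the product of the weights of its arcs. -/
noncomputable def forestWeight {n : ℕ} (ε : Fin n → Fin n → ℝ)
    (F : Finset (Fin n × Fin n)) : ℝ :=
  ∏ p ∈ F, ε p.1 p.2

/-- `σ_k`: the total weight of the out forests with exactly `k` arcs. -/
noncomputable def sigmaW {n : ℕ} (ε : Fin n → Fin n → ℝ) (k : ℕ) : ℝ :=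
  ∑ᶠ F ∈ {F : Finset (Fin n × Fin n) | IsOutForest ε F ∧ F.card = k}, forestWeight ε F

/-- `Q_k`: the matrix whose `(i,j)` entry is the total weight of out forests with `k`
arcs in which `j` has no incoming arc and `i` is reachable from `j` along arcs of `F`. -/
noncomputable def QMat {n : ℕ} (ε : Fin n → Fin n → ℝ) (k : ℕ) :
    Matrix (Fin n) (Fin n) ℝ :=
  Matrix.of fun i j =>
    ∑ᶠ F ∈ {F : Finset (Fin n × Fin n) | IsOutForest ε F ∧ F.card = k ∧
        (∀ u, (u, j) ∉ F) ∧ Relation.ReflTransGen (fun a b => (a, b) ∈ F) j i},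
      forestWeight ε F

/-- `n − v`: the maximum number of arcs in an out forest. -/
noncomputable def maxForestCard {n : ℕ} (ε : Fin n → Fin n → ℝ) : ℕ :=
  sSup {k | ∃ F : Finset (Fin n × Fin n), IsOutForest ε F ∧ F.card = k}

/-- The Kirchhoff matrix: `l i j = -ε j i` for `j ≠ i`, `l i i = Σ_{k ≠ i} ε k i`. -/
noncomputable def kirchhoff {n : ℕ} (ε : Fin n → Fin n → ℝ) : Matrix (Fin n) (Fin n) ℝ :=
  Matrix.of fun i j =>
    if i = j then ∑ k ∈ Finset.univ.filter (· ≠ i), ε k i else -(ε j i)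

/-- The normalized matrix of maximum out forests `J̄ = σ_{n−v}⁻¹ Q_{n−v}`. -/
noncomputable def Jbar {n : ℕ} (ε : Fin n → Fin n → ℝ) : Matrix (Fin n) (Fin n) ℝ :=
  (sigmaW ε (maxForestCard ε))⁻¹ • QMat ε (maxForestCard ε)

/-! ### Auxiliary machinery -/

open Relation Finset

section Chains
variable {α : Type*}

lemma chain_rtg (r : α → α → Prop) : ∀ (k : ℕ) (f : ℕ → α), (∀ i < k, r (f i) (f (i+1))) →
    Relation.ReflTransGen r (f 0) (f k) := by
  intro k
  induction k with
  | zero => intro f _; exact .refl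
  | succ k ih =>
    intro f h
    exact (ih f fun i hi => h i (hi.trans (Nat.lt_succ_self _))).tail (h k (Nat.lt_succ_self _))

lemma rtg_chain {r : α → α → Prop} {a b : α} (h : Relation.ReflTransGen r a b) :
    ∃ (k : ℕ) (f : ℕ → α), f 0 = a ∧ f k = b ∧ ∀ i < k, r (f i) (f (i+1)) := by
  induction h with
  | refl => exact ⟨0, fun _ => a, rfl, rfl, by omega⟩
  | @tail b c hab hbc ih =>
    obtain ⟨k, f, h0, hk, hc⟩ := ih
    refine ⟨k+1, fun i => if i ≤ k then f i else c, by simp [h0], by simp, ?_⟩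
    intro i hi
    rcases Nat.lt_or_ge i k with h' | h'
    · simpa [Nat.le_of_lt h', Nat.succ_le_of_lt h'] using hc i h'
    · have : i = k := by omega
      subst this
      simpa [hk] using hbc
end Chains

section Forests

attribute [local instance] Classical.propDecidable

variable {n : ℕ} {ε : Fin n → Fin n → ℝ}

/-- reachability along arcs of `F` -/
def rch {n : ℕ} (F : Finset (Fin n × Fin n)) : Fin n → Fin n → Prop :=
  Relation.ReflTransGen (fun a b => (a, b) ∈ F)

lemma rch_refl {F : Finset (Fin n × Fin n)} {a : Fin n} : rch F a a := ReflTransGen.refl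

/-- no cycles: an arc plus a return path is impossible -/
lemma IsOutForest.no_loop {F : Finset (Fin n × Fin n)} (hF : IsOutForest ε F) {a b : Fin n}
    (hab : (a, b) ∈ F) (h : rch F b a) : False := by
  obtain ⟨k, f, h0, hk, hc⟩ := rtg_chain h
  apply hF.2.2
  refine ⟨k+1, fun i => if i ≤ k then f i else b, by omega, by simp [h0], ?_⟩
  intro i hi
  rcases Nat.lt_or_ge i k with h' | h'
  · simpa [Nat.le_of_lt h', Nat.succ_le_of_lt h'] using hc i h'
  · have : i = k := by omega
    subst this
    simpa [hk] using hab

lemma acyclic_of_no_loop {F : Finset (Fin n × Fin n)} (h : ∀ a b, (a, b) ∈ F → ¬ rch F b a) :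
    ¬ ∃ (k : ℕ) (f : ℕ → Fin n), 0 < k ∧ f 0 = f k ∧ ∀ i < k, (f i, f (i + 1)) ∈ F := by
  rintro ⟨k, f, hk, he, hc⟩
  apply h (f 0) (f 1) (hc 0 hk)
  have h1 : rch F (f 1) (f k) := by
    have := chain_rtg (fun a b => (a, b) ∈ F) (k - 1) (fun t => f (t + 1))
      (fun i hi => hc (i + 1) (by omega))
    simpa [rch, show k - 1 + 1 = k by omega] using this
  rw [← he] at h1
  exact h1

lemma rch_last {F : Finset (Fin n × Fin n)} {x y : Fin n} (h : rch F x y) :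
    x = y ∨ ∃ c, rch F x c ∧ (c, y) ∈ F := by
  rcases h.cases_tail with h | ⟨c, h1, h2⟩
  · exact Or.inl h.symm
  · exact Or.inr ⟨c, h1, h2⟩

/-- ancestors of a vertex are totally ordered by reachability -/
lemma IsOutForest.comparable {F : Finset (Fin n × Fin n)} (hF : IsOutForest ε F)
    {a b : Fin n} : ∀ {m : Fin n}, rch F b m → rch F a m → rch F a b ∨ rch F b a := by
  intro m hbm
  induction hbm with
  | refl => intro ham; exact Or.inl ham
  | @tail d c hbd hdc ih =>
    intro hac
    rcases rch_last hac with rfl | ⟨e, hae, hec⟩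
    · exact Or.inr (hbd.tail hdc)
    · have he : e = d := hF.2.1 e d c hec hdc
      exact ih (he ▸ hae)

lemma root_eq_of_rch {F : Finset (Fin n × Fin n)} {x y : Fin n}
    (h : rch F x y) (hy : ∀ u, (u, y) ∉ F) : x = y := by
  rcases rch_last h with h | ⟨c, _, hc⟩
  · exact h
  · exact absurd hc (hy c)

lemma exists_root_aux {F : Finset (Fin n × Fin n)} (hF : IsOutForest ε F) :
    ∀ (N : ℕ) (m : Fin n), (univ.filter fun x => rch F x m).card ≤ N →
      ∃ j, (∀ u, (u, j) ∉ F) ∧ rch F j m := by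
  intro N
  induction N with
  | zero =>
    intro m hm
    exfalso
    have : m ∈ univ.filter fun x => rch F x m := by simp [rch_refl]
    have := Finset.card_pos.mpr ⟨m, this⟩
    omega
  | succ N ih =>
    intro m hm
    by_cases h : ∀ u, (u, m) ∉ F
    · exact ⟨m, h, rch_refl⟩
    · push_neg at h
      obtain ⟨p, hp⟩ := h
      have hsub : (univ.filter fun x => rch F x p) ⊆ (univ.filter fun x => rch F x m).erase m := by
        intro x hx
        simp only [mem_filter, mem_univ, true_and] at hx
        rw [Finset.mem_erase]
        refine ⟨?_, by simp only [mem_filter, mem_univ, true_and]; exact hx.tail hp⟩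
        rintro rfl
        exact hF.no_loop hp hx
      have hcard : (univ.filter fun x => rch F x p).card ≤ N := by
        have h1 := Finset.card_le_card hsub
        have h2 : ((univ.filter fun x => rch F x m).erase m).card
            = (univ.filter fun x => rch F x m).card - 1 :=
          Finset.card_erase_of_mem (by simp [rch_refl])
        have h3 : m ∈ univ.filter fun x => rch F x m := by simp [rch_refl]
        have := Finset.card_pos.mpr ⟨m, h3⟩
        omega
      obtain ⟨j, hj1, hj2⟩ := ih p hcard
      exact ⟨j, hj1, hj2.tail hp⟩

lemma existsUnique_root {F : Finset (Fin n × Fin n)} (hF : IsOutForest ε F) (m : Fin n) :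
    ∃! j, (∀ u, (u, j) ∉ F) ∧ rch F j m := by
  obtain ⟨j, hj1, hj2⟩ := exists_root_aux hF (univ.filter fun x => rch F x m).card m le_rfl
  refine ⟨j, ⟨hj1, hj2⟩, ?_⟩
  rintro j' ⟨hj'1, hj'2⟩
  rcases hF.comparable hj2 hj'2 with h | h
  · exact root_eq_of_rch h hj1
  · exact (root_eq_of_rch h hj'1).symm

/-! ### The arc-swap construction -/

variable {G F' : Finset (Fin n × Fin n)} {i q m : Fin n}

lemma mem_F' (hF' : F' = insert (m, i) (G.erase (q, i))) (p : Fin n × Fin n) :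
    p ∈ F' ↔ p = (m, i) ∨ (p ∈ G ∧ p ≠ (q, i)) := by
  subst hF'; simp only [mem_insert, mem_erase]; tauto

lemma claimB (hF' : F' = insert (m, i) (G.erase (q, i))) :
    ∀ x y, rch F' x y → rch G x y ∨ (rch G x m ∧ rch F' i y) := by
  intro x y h
  induction h using Relation.ReflTransGen.head_induction_on with
  | refl => exact Or.inl ReflTransGen.refl
  | head h' hrest ih =>
    rename_i a c
    rcases (mem_F' hF' (a, c)).1 h' with hmi | ⟨hG, _⟩
    · rw [Prod.mk.injEq] at hmi
      obtain ⟨rfl, rfl⟩ := hmi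
      exact Or.inr ⟨ReflTransGen.refl, hrest⟩
    · rcases ih with h1 | ⟨h1, h2⟩
      · exact Or.inl (h1.head hG)
      · exact Or.inr ⟨h1.head hG, h2⟩

lemma claimC (hF' : F' = insert (m, i) (G.erase (q, i))) (hb : ¬ rch G i m) :
    ∀ y, rch F' i y → rch G i y := by
  intro y h
  rcases claimB hF' i y h with h1 | ⟨h1, _⟩
  · exact h1
  · exact absurd h1 hb

lemma claimD (hF' : F' = insert (m, i) (G.erase (q, i))) :
    ∀ x y, rch G x y → rch F' x y ∨ (rch F' x q ∧ rch G i y) := by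
  intro x y h
  induction h using Relation.ReflTransGen.head_induction_on with
  | refl => exact Or.inl ReflTransGen.refl
  | head h' hrest ih =>
    rename_i a c
    by_cases hq : (a, c) = (q, i)
    · rw [Prod.mk.injEq] at hq
      obtain ⟨rfl, rfl⟩ := hq
      exact Or.inr ⟨ReflTransGen.refl, hrest⟩
    · have hmem : (a, c) ∈ F' := (mem_F' hF' (a, c)).2 (Or.inr ⟨h', hq⟩)
      rcases ih with h1 | ⟨h1, h2⟩
      · exact Or.inl (h1.head hmem)
      · exact Or.inr ⟨h1.head hmem, h2⟩

lemma swap_bundle (hG : IsOutForest ε G) (hqi : (q, i) ∈ G) (hmi : 0 < ε m i)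
    (hb : ¬ rch G i m) (hF' : F' = insert (m, i) (G.erase (q, i))) :
    IsOutForest ε F' ∧ F'.card = G.card ∧
    (∀ u, ((u, i) ∈ F' ↔ u = m)) ∧
    ¬ rch F' i q ∧
    G = insert (q, i) (F'.erase (m, i)) ∧
    ε q i * forestWeight ε F' = ε m i * forestWeight ε G := by
  have hmiG : (m, i) ∉ G.erase (q, i) := by
    intro h
    rw [Finset.mem_erase] at h
    exact h.1 (by rw [hG.2.1 m q i h.2 hqi])
  have hinarc : ∀ u, ((u, i) ∈ F' ↔ u = m) := by
    intro u
    rw [mem_F' hF']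
    constructor
    · rintro (h | ⟨h1, h2⟩)
      · exact (Prod.mk.injEq .. ▸ h).1
      · exact absurd (by rw [hG.2.1 u q i h1 hqi]) h2
    · rintro rfl; exact Or.inl rfl
  have hforest : IsOutForest ε F' := by
    refine ⟨?_, ?_, ?_⟩
    · intro p hp
      rcases (mem_F' hF' p).1 hp with rfl | ⟨h1, _⟩
      · exact hmi
      · exact hG.1 p h1
    · intro u u' v hu hu'
      by_cases hv : v = i
      · subst hv
        rw [(hinarc u).1 hu, (hinarc u').1 hu']
      · rcases (mem_F' hF' (u, v)).1 hu with h | ⟨h1, _⟩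
        · exact absurd (Prod.mk.injEq .. ▸ h).2 hv
        · rcases (mem_F' hF' (u', v)).1 hu' with h' | ⟨h1', _⟩
          · exact absurd (Prod.mk.injEq .. ▸ h').2 hv
          · exact hG.2.1 u u' v h1 h1'
    · apply acyclic_of_no_loop
      intro a b hab hba
      rcases (mem_F' hF' (a, b)).1 hab with h | ⟨h1, _⟩
      · rw [Prod.mk.injEq] at h
        obtain ⟨rfl, rfl⟩ := h
        exact hb (claimC hF' hb a hba)
      · rcases claimB hF' b a hba with h2 | ⟨h2, h3⟩
        · exact hG.no_loop h1 h2
        · have h4 : rch G i a := claimC hF' hb a h3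
          exact hb ((h4.tail h1).trans h2)
  have hcard : F'.card = G.card := by
    rw [hF', Finset.card_insert_of_notMem hmiG, Finset.card_erase_of_mem hqi]
    have : 0 < G.card := Finset.card_pos.mpr ⟨_, hqi⟩
    omega
  have hnoiq : ¬ rch F' i q := by
    intro h
    exact hG.no_loop hqi (claimC hF' hb q h)
  have hrecover : G = insert (q, i) (F'.erase (m, i)) := by
    ext p
    rw [Finset.mem_insert, Finset.mem_erase, mem_F' hF']
    constructor
    · intro hp
      by_cases h1 : p = (q, i)
      · exact Or.inl h1
      · refine Or.inr ⟨?_, Or.inr ⟨hp, h1⟩⟩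
        rintro rfl
        exact h1 (by rw [hG.2.1 m q i hp hqi])
    · rintro (rfl | ⟨h1, rfl | ⟨h2, _⟩⟩)
      · exact hqi
      · exact absurd rfl h1
      · exact h2
  have hweight : ε q i * forestWeight ε F' = ε m i * forestWeight ε G := by
    have e1 : forestWeight ε F' = ε m i * forestWeight ε (G.erase (q, i)) := by
      rw [hF', forestWeight, forestWeight, Finset.prod_insert hmiG]
    have e2 : ε q i * forestWeight ε (G.erase (q, i)) = forestWeight ε G := by
      rw [forestWeight, forestWeight]
      exact Finset.mul_prod_erase G (fun p => ε p.1 p.2) hqi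
    rw [e1, ← e2]; ring
  exact ⟨hforest, hcard, hinarc, hnoiq, hrecover, hweight⟩

lemma swap_root {j : Fin n} (hroot : ∀ u, (u, j) ∉ G) (hij : i ≠ j)
    (hF' : F' = insert (m, i) (G.erase (q, i))) : ∀ u, (u, j) ∉ F' := by
  intro u hu
  rcases (mem_F' hF' (u, j)).1 hu with h | ⟨h1, _⟩
  · exact hij (Prod.mk.injEq .. ▸ h).2.symm
  · exact hroot u h1
end Forests
section Sums

attribute [local instance] Classical.propDecidable

variable {n : ℕ} {ε : Fin n → Fin n → ℝ}

lemma finsum_to_finset {β : Type*} [Fintype β] (p : β → Prop) [DecidablePred p] (f : β → ℝ) :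
    (∑ᶠ x ∈ {y | p y}, f x) = ∑ x ∈ univ.filter p, f x := by
  rw [← finsum_mem_coe_finset]
  congr 1
  ext x; simp

/-- the defining condition of the entries of `Q_k` -/
def condQ {n : ℕ} (ε : Fin n → Fin n → ℝ) (k : ℕ) (j : Fin n)
    (F : Finset (Fin n × Fin n)) (x : Fin n) : Prop :=
  IsOutForest ε F ∧ F.card = k ∧ (∀ u, (u, j) ∉ F) ∧ rch F j x

lemma condQ_iff {k : ℕ} {j : Fin n} {F : Finset (Fin n × Fin n)} {x : Fin n} :
    condQ ε k j F x ↔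
      (IsOutForest ε F ∧ F.card = k ∧ (∀ u, (u, j) ∉ F) ∧ rch F j x) := Iff.rfl

lemma QMat_eq (k : ℕ) (x j : Fin n) :
    QMat ε k x j = ∑ F ∈ univ.filter (fun F => condQ ε k j F x), forestWeight ε F := by
  rw [show QMat ε k x j = ∑ᶠ F ∈ {F : Finset (Fin n × Fin n) | condQ ε k j F x},
      forestWeight ε F from rfl]
  exact finsum_to_finset _ _

lemma sigmaW_eq (k : ℕ) :
    sigmaW ε k = ∑ F ∈ univ.filter (fun F => IsOutForest ε F ∧ F.card = k),
      forestWeight ε F := by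
  rw [show sigmaW ε k = ∑ᶠ F ∈ {F : Finset (Fin n × Fin n) | IsOutForest ε F ∧ F.card = k},
      forestWeight ε F from rfl]
  exact finsum_to_finset (fun F => IsOutForest ε F ∧ F.card = k) (forestWeight ε)

lemma sum_Q_row (k : ℕ) (m : Fin n) : ∑ j', QMat ε k m j' = sigmaW ε k := by
  calc ∑ j', QMat ε k m j'
      = ∑ j', ∑ F ∈ univ.filter (fun F => condQ ε k j' F m), forestWeight ε F :=
        Finset.sum_congr rfl fun j' _ => QMat_eq k m j'
    _ = ∑ j', ∑ F : Finset (Fin n × Fin n), if condQ ε k j' F m then forestWeight ε F else 0 := by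
        simp [Finset.sum_filter]
    _ = ∑ F : Finset (Fin n × Fin n), ∑ j', if condQ ε k j' F m then forestWeight ε F else 0 :=
        Finset.sum_comm
    _ = ∑ F : Finset (Fin n × Fin n), if IsOutForest ε F ∧ F.card = k then forestWeight ε F
          else 0 := by
        apply Finset.sum_congr rfl
        intro F _
        by_cases hF : IsOutForest ε F ∧ F.card = k
        · obtain ⟨j0, hj0, hun⟩ := existsUnique_root hF.1 m
          rw [Finset.sum_eq_single j0]
          · rw [if_pos (condQ_iff.mpr ⟨hF.1, hF.2, hj0.1, hj0.2⟩), if_pos hF]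
          · intro b _ hb
            rw [if_neg]
            intro hcb
            exact hb (hun b ⟨(condQ_iff.mp hcb).2.2.1, (condQ_iff.mp hcb).2.2.2⟩)
          · intro h; exact absurd (mem_univ j0) h
        · rw [if_neg hF]
          apply Finset.sum_eq_zero
          intro j' _
          rw [if_neg]
          intro hc
          exact hF ⟨(condQ_iff.mp hc).1, (condQ_iff.mp hc).2.1⟩
    _ = sigmaW ε k := by rw [sigmaW_eq, Finset.sum_filter]

lemma kirchhoff_offdiag {u i : Fin n} (hu : u ≠ i) : kirchhoff ε i u = -(ε u i) := by
  unfold kirchhoff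
  rw [Matrix.of_apply, if_neg (fun h => hu h.symm)]

lemma kirchhoff_diag (i : Fin n) : kirchhoff ε i i = ∑ u ∈ univ.erase i, ε u i := by
  unfold kirchhoff
  rw [Matrix.of_apply, if_pos rfl, Finset.filter_ne']

lemma kirchhoff_rowsum (i : Fin n) : ∑ u, kirchhoff ε i u = 0 := by
  rw [← Finset.add_sum_erase _ _ (mem_univ i), kirchhoff_diag,
    Finset.sum_congr rfl (fun u hu => kirchhoff_offdiag (Finset.mem_erase.1 hu).1),
    ← Finset.sum_add_distrib]
  simp

lemma LQ_rowsum (k : ℕ) (i : Fin n) : ∑ j, (kirchhoff ε * QMat ε k) i j = 0 := by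
  simp_rw [Matrix.mul_apply]
  rw [Finset.sum_comm]
  have h : ∀ u : Fin n, ∑ j, kirchhoff ε i u * QMat ε k u j
      = kirchhoff ε i u * sigmaW ε k := fun u => by rw [← Finset.mul_sum, sum_Q_row]
  rw [Finset.sum_congr rfl (fun u _ => h u), ← Finset.sum_mul, kirchhoff_rowsum, zero_mul]

end Sums
section OffDiag

attribute [local instance] Classical.propDecidable

variable {n : ℕ} {ε : Fin n → Fin n → ℝ}

lemma LQ_offdiag (hnn : ∀ a b, 0 ≤ ε a b) (hd : ∀ a, ε a a = 0) (k : ℕ) {i j : Fin n}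
    (hij : i ≠ j) : (kirchhoff ε * QMat ε k) i j ≤ 0 := by
  set w : Fin n × Finset (Fin n × Fin n) → ℝ :=
    fun x => ε x.1 i * forestWeight ε x.2 with hw
  set T : Finset (Fin n × Finset (Fin n × Fin n)) :=
    univ.filter (fun x => 0 < ε x.1 i ∧ condQ ε k j x.2 i) with hT
  set S : Finset (Fin n × Finset (Fin n × Fin n)) :=
    univ.filter (fun x => condQ ε k j x.2 x.1) with hS
  -- Step 1: express the entry as a difference of sums over pairs
  have e1 : (∑ u, ε u i * QMat ε k i j) = ∑ x ∈ T, w x := by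
    rw [hT, Finset.sum_filter, Fintype.sum_prod_type]
    apply Finset.sum_congr rfl
    intro u _
    rw [QMat_eq k i j, Finset.mul_sum, Finset.sum_filter]
    apply Finset.sum_congr rfl
    intro F _
    by_cases h1 : condQ ε k j F i
    · by_cases h2 : 0 < ε u i
      · simp [h1, h2, hw]
      · have hz : ε u i = 0 := le_antisymm (not_lt.1 h2) (hnn u i)
        simp [h1, h2, hw, hz]
    · simp [h1]
  have e2 : (∑ u, ε u i * QMat ε k u j) = ∑ x ∈ S, w x := by
    rw [hS, Finset.sum_filter, Fintype.sum_prod_type]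
    apply Finset.sum_congr rfl
    intro u _
    rw [QMat_eq k u j, Finset.mul_sum, Finset.sum_filter]
  have hsplit : (kirchhoff ε * QMat ε k) i j = (∑ x ∈ T, w x) - (∑ x ∈ S, w x) := by
    rw [Matrix.mul_apply, ← e1, ← e2]
    calc ∑ u, kirchhoff ε i u * QMat ε k u j
        = kirchhoff ε i i * QMat ε k i j
            + ∑ u ∈ univ.erase i, kirchhoff ε i u * QMat ε k u j :=
          (Finset.add_sum_erase _ _ (mem_univ i)).symm
      _ = (∑ u ∈ univ.erase i, ε u i * QMat ε k i j)
            + ∑ u ∈ univ.erase i, (-(ε u i)) * QMat ε k u j := by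
          rw [kirchhoff_diag, Finset.sum_mul]
          congr 1
          exact Finset.sum_congr rfl fun u hu => by
            rw [kirchhoff_offdiag (Finset.mem_erase.1 hu).1]
      _ = (∑ u, ε u i * QMat ε k i j) - ∑ u, ε u i * QMat ε k u j := by
          rw [← Finset.add_sum_erase _ (fun u => ε u i * QMat ε k i j) (mem_univ i),
            ← Finset.add_sum_erase _ (fun u => ε u i * QMat ε k u j) (mem_univ i)]
          simp only [hd i, zero_mul, zero_add, neg_mul]
          rw [Finset.sum_neg_distrib]
          ring
  -- Step 2: the weight-preserving injection
  set φ : (Fin n × Finset (Fin n × Fin n)) → (Fin n × Finset (Fin n × Fin n)) := fun x =>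
    if rch x.2 i x.1 then x
    else if h : ∃ u, (u, i) ∈ x.2 then
      (h.choose, insert (x.1, i) (x.2.erase (h.choose, i))) else x with hphi
  have hspec : ∀ x ∈ T, (φ x ∈ S) ∧ w (φ x) = w x ∧
      (rch (φ x).2 i (φ x).1 ↔ rch x.2 i x.1) ∧
      (¬ rch x.2 i x.1 → ((∀ u, ((u, i) ∈ (φ x).2 ↔ u = x.1)) ∧
        x.2 = insert ((φ x).1, i) ((φ x).2.erase (x.1, i)))) := by
    rintro ⟨m, G⟩ hx
    rw [hT, Finset.mem_filter] at hx
    obtain ⟨-, hpos, hfor, hcard, hroot, hreach⟩ := hx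
    have hqex : ∃ u, (u, i) ∈ G := by
      rcases rch_last hreach with h | ⟨t, _, ht⟩
      · exact absurd h.symm hij
      · exact ⟨t, ht⟩
    by_cases hbr : rch G i m
    · have hphieq : φ (m, G) = (m, G) := by simp [hphi, hbr]
      rw [hphieq]
      refine ⟨?_, rfl, Iff.rfl, fun h => absurd hbr h⟩
      rw [hS, Finset.mem_filter]
      exact ⟨mem_univ _, hfor, hcard, hroot, hreach.trans hbr⟩
    · set q := hqex.choose with hqdef
      have hqi : (q, i) ∈ G := hqex.choose_spec
      have hphieq : φ (m, G) = (q, insert (m, i) (G.erase (q, i))) := by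
        simp only [hphi]
        rw [if_neg hbr, dif_pos hqex]
      obtain ⟨hf1, hf2, hf3, hf4, hf5, hf6⟩ := swap_bundle hfor hqi hpos hbr rfl
      have hroot' := swap_root (G := G) (m := m) (q := q) hroot hij rfl
      have hreach' : rch (insert (m, i) (G.erase (q, i))) j q := by
        have hjq : rch G j q := by
          rcases rch_last hreach with h | ⟨t, h1, h2⟩
          · exact absurd h.symm hij
          · have : t = q := hfor.2.1 t q i h2 hqi
            exact this ▸ h1
        rcases claimD rfl j q hjq with h | ⟨h, _⟩ <;> exact h
      rw [hphieq]
      refine ⟨?_, ?_, ?_, fun _ => ⟨hf3, hf5⟩⟩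
      · rw [hS, Finset.mem_filter]
        exact ⟨mem_univ _, hf1, hf2.trans hcard, hroot', hreach'⟩
      · simpa [hw] using hf6
      · exact iff_of_false hf4 hbr
  have hwnn : ∀ y ∈ S, 0 ≤ w y := by
    intro y _
    exact mul_nonneg (hnn _ _) (Finset.prod_nonneg fun p _ => hnn _ _)
  have hinj : ∀ x1 ∈ T, ∀ x2 ∈ T, φ x1 = φ x2 → x1 = x2 := by
    intro x1 hx1 x2 hx2 he
    obtain ⟨hS1, hw1, hb1, hr1⟩ := hspec x1 hx1
    obtain ⟨hS2, hw2, hb2, hr2⟩ := hspec x2 hx2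
    by_cases h1 : rch x1.2 i x1.1
    · have h2 : rch x2.2 i x2.1 := hb2.1 (by rw [← he]; exact hb1.2 h1)
      have f1 : φ x1 = x1 := by simp [hphi, h1]
      have f2 : φ x2 = x2 := by simp [hphi, h2]
      rw [← f1, ← f2, he]
    · have h2 : ¬ rch x2.2 i x2.1 := fun hh => h1 (hb1.1 (by rw [he]; exact hb2.2 hh))
      obtain ⟨hin1, hrec1⟩ := hr1 h1
      obtain ⟨hin2, hrec2⟩ := hr2 h2
      have hm : x1.1 = x2.1 := by
        have hmem : (x1.1, i) ∈ (φ x1).2 := (hin1 x1.1).2 rfl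
        rw [he] at hmem
        exact (hin2 x1.1).1 hmem
      have hG : x1.2 = x2.2 := by rw [hrec1, hrec2, he, hm]
      exact Prod.ext hm hG
  have key : (∑ x ∈ T, w x) ≤ ∑ x ∈ S, w x := by
    calc ∑ x ∈ T, w x = ∑ x ∈ T, w (φ x) :=
          Finset.sum_congr rfl (fun x hx => ((hspec x hx).2.1).symm)
      _ = ∑ y ∈ T.image φ, w y := (Finset.sum_image (fun x hx y hy h => hinj x hx y hy h)).symm
      _ ≤ ∑ y ∈ S, w y := by
          apply Finset.sum_le_sum_of_subset_of_nonneg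
          · intro y hy
            obtain ⟨x, hx, rfl⟩ := Finset.mem_image.1 hy
            exact (hspec x hx).1
          · intro y hy _
            exact hwnn y hy
  rw [hsplit]
  linarith

end OffDiag

theorem kirchhoff_mul_QMat_is_kirchhoff (n : ℕ) (hn : 1 < n) (ε : Fin n → Fin n → ℝ)
    (hnonneg : ∀ i j, 0 ≤ ε i j) (hdiag : ∀ i, ε i i = 0) :
    ∀ k : ℕ, k ≤ maxForestCard ε →
      (∀ i j : Fin n, i ≠ j → (kirchhoff ε * QMat ε k) i j ≤ 0) ∧
      (∀ i : Fin n, 0 ≤ (kirchhoff ε * QMat ε k) i i) ∧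
      (∀ i : Fin n, ∑ j, (kirchhoff ε * QMat ε k) i j = 0) ∧
      (∃ δ : Fin n → Fin n → ℝ, (∀ i j, 0 ≤ δ i j) ∧ (∀ i, δ i i = 0) ∧
        kirchhoff δ = kirchhoff ε * QMat ε k) := by
  intro k _
  classical
  have hoff : ∀ i j : Fin n, i ≠ j → (kirchhoff ε * QMat ε k) i j ≤ 0 :=
    fun i j hij => LQ_offdiag hnonneg hdiag k hij
  have hrow : ∀ i : Fin n, ∑ j, (kirchhoff ε * QMat ε k) i j = 0 := LQ_rowsum k
  have hdiagpos : ∀ i : Fin n, 0 ≤ (kirchhoff ε * QMat ε k) i i := by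
    intro i
    have h1 : (kirchhoff ε * QMat ε k) i i
        = -∑ j ∈ univ.erase i, (kirchhoff ε * QMat ε k) i j := by
      have := hrow i
      rw [← Finset.add_sum_erase _ _ (mem_univ i)] at this
      linarith
    rw [h1]
    have h2 : ∑ j ∈ univ.erase i, (kirchhoff ε * QMat ε k) i j ≤ 0 :=
      Finset.sum_nonpos fun j hj => hoff i j (fun h => (Finset.mem_erase.1 hj).1 h.symm)
    linarith
  refine ⟨hoff, hdiagpos, hrow, ?_⟩
  set δ : Fin n → Fin n → ℝ :=
    fun a b => if a = b then 0 else -((kirchhoff ε * QMat ε k) b a) with hδ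
  have hδval : ∀ a b, δ a b = if a = b then 0 else -((kirchhoff ε * QMat ε k) b a) :=
    fun a b => rfl
  refine ⟨δ, ?_, ?_, ?_⟩
  · intro a b
    rw [hδval]
    by_cases hab : a = b
    · simp [hab]
    · have hba : b ≠ a := fun h => hab h.symm
      rw [if_neg hab]
      have := hoff b a hba
      linarith
  · intro a; rw [hδval, if_pos rfl]
  · ext i j
    by_cases hij : i = j
    · subst hij
      have hk1 : kirchhoff δ i i = ∑ u ∈ univ.erase i, δ u i := by
        unfold kirchhoff
        rw [Matrix.of_apply, if_pos rfl, Finset.filter_ne']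
      rw [hk1]
      have h1 : ∀ u ∈ univ.erase i, δ u i = -((kirchhoff ε * QMat ε k) i u) :=
        fun u hu => by rw [hδval, if_neg (Finset.mem_erase.1 hu).1]
      rw [Finset.sum_congr rfl h1, Finset.sum_neg_distrib]
      have := hrow i
      rw [← Finset.add_sum_erase _ _ (mem_univ i)] at this
      linarith
    · have hk2 : kirchhoff δ i j = -(δ j i) := by
        unfold kirchhoff
        rw [Matrix.of_apply, if_neg hij]
      rw [hk2, hδval, if_neg (fun h => hij h.symm)]
      ring
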